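/- Let 0 < α ≤ 1 and let A : 𝓑 → ℝ be α-Hölder with constant H. For each 0 < s < 1, let u_s be the unique bounded continuous function satisfying u_s(x) = log ∫_M e^{A(ax) + s·u_s(ax)} da for all x ∈ 𝓑 (the fixed point of the contraction 𝒯_{s,A}). Then for every s ∈ (0,1) and all x, y ∈ 𝓑, |u_s(x) − u_s(y)| ≤ (2^α/(2^α − 1))·H·d(x,y)^α. In particular the family {u_s : 0 < s < 1} is equicontinuous, with a Hölder constant independent of s. -/

import Mathlib

open MeasureTheory Filter Topology

noncomputable section

instance : Fact (0 < 2 * Real.pi) := ⟨by positivity⟩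

/-- The circle `M = ℝ/2πℤ` with arc-length metric. -/
abbrev Circ : Type := AddCircle (2 * Real.pi)

/-- The normalized Haar (Lebesgue) probability measure on the circle. -/
def haarC : Measure Circ := AddCircle.haarAddCircle

/-- The Bernoulli space `𝓑 = M^ℕ`. -/
abbrev Bs : Type := ℕ → Circ

/-- The left shift `σ`. -/
def shift (x : Bs) : Bs := fun n => x (n + 1)

/-- Prepending a symbol: `cons a x = ax = (a, x₀, x₁, …)`. -/
def cons (a : Circ) (x : Bs) : Bs := fun n =>
  match n with
  | 0 => a
  | k + 1 => x k

/-- The metric `d(x,y) = Σ_k 2^{-k} d_M(x_k, y_k)` on `𝓑`. -/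
def dB (x y : Bs) : ℝ := ∑' k : ℕ, (1 / 2 : ℝ) ^ k * dist (x k) (y k)

/-- `A` is α-Hölder with constant `H` for the metric `dB`. -/
def IsHolderB (α H : ℝ) (A : Bs → ℝ) : Prop := ∀ x y, |A x - A y| ≤ H * dB x y ^ α

/-- The Ruelle operator `L_A ψ (x) = ∫_M e^{A(ax)} ψ(ax) da`. -/
def Ruelle (A : Bs → ℝ) (ψ : Bs → ℝ) : Bs → ℝ :=
  fun x => ∫ a, Real.exp (A (cons a x)) * ψ (cons a x) ∂haarC

instance : IsProbabilityMeasure haarC := by unfold haarC; infer_instance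

lemma circ_bdd : ∃ D : ℝ, 0 ≤ D ∧ ∀ p q : Circ, dist p q ≤ D := by
  obtain ⟨C, hC⟩ := (Metric.isBounded_iff.mp (isCompact_univ (X := Circ)).isBounded)
  exact ⟨max C 0, le_max_right _ _, fun p q =>
    le_trans (hC (Set.mem_univ p) (Set.mem_univ q)) (le_max_left _ _)⟩

lemma summable_dB (x y : Bs) :
    Summable (fun k : ℕ => (1 / 2 : ℝ) ^ k * dist (x k) (y k)) := by
  obtain ⟨D, hD0, hD⟩ := circ_bdd
  have hg : Summable (fun k : ℕ => (1 / 2 : ℝ) ^ k * D) :=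
    (summable_geometric_of_lt_one (by norm_num) (by norm_num)).mul_right D
  refine Summable.of_nonneg_of_le (fun k => by positivity) (fun k => ?_) hg
  exact mul_le_mul_of_nonneg_left (hD _ _) (by positivity)

lemma dB_nonneg (x y : Bs) : 0 ≤ dB x y :=
  tsum_nonneg fun k => by positivity

lemma dB_cons (a : Circ) (x y : Bs) : dB (cons a x) (cons a y) = dB x y / 2 := by
  unfold dB
  rw [Summable.tsum_eq_zero_add (summable_dB (cons a x) (cons a y))]
  have h : ∀ k : ℕ, (1 / 2 : ℝ) ^ (k + 1) * dist (cons a x (k + 1)) (cons a y (k + 1))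
      = (1 / 2) * ((1 / 2 : ℝ) ^ k * dist (x k) (y k)) := by
    intro k
    show (1 / 2 : ℝ) ^ (k + 1) * dist (x k) (y k) = _
    ring
  have e1 : ∑' k : ℕ, (1 / 2 : ℝ) ^ (k + 1) * dist (cons a x (k + 1)) (cons a y (k + 1))
      = (1 / 2) * ∑' k : ℕ, (1 / 2 : ℝ) ^ k * dist (x k) (y k) := by
    rw [← tsum_mul_left]
    exact tsum_congr h
  rw [e1]
  show (1 / 2 : ℝ) ^ 0 * dist a a + _ = _
  rw [dist_self]
  ring

lemma continuous_cons (x : Bs) : Continuous (fun a : Circ => cons a x) := by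
  apply continuous_pi
  intro n
  cases n with
  | zero => exact continuous_id
  | succ k => exact continuous_const

lemma integrable_circ {h : Circ → ℝ} (hc : Continuous h) : Integrable h haarC :=
  hc.integrable_of_hasCompactSupport
    (IsCompact.of_isClosed_subset isCompact_univ (isClosed_tsupport h) (Set.subset_univ _))

lemma integral_exp_pos {h : Circ → ℝ} (hc : Continuous h) :
    0 < ∫ a, Real.exp (h a) ∂haarC := by
  obtain ⟨a0, -, hmin⟩ := isCompact_univ.exists_isMinOn (Set.univ_nonempty) hc.continuousOn
  have h1 : ∀ a : Circ, Real.exp (h a0) ≤ Real.exp (h a) :=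
    fun a => Real.exp_le_exp.mpr (hmin (Set.mem_univ a))
  have : Real.exp (h a0) ≤ ∫ a, Real.exp (h a) ∂haarC := by
    calc Real.exp (h a0) = ∫ _ : Circ, Real.exp (h a0) ∂haarC := by simp
    _ ≤ _ := integral_mono (integrable_const _) (integrable_circ (Real.continuous_exp.comp hc)) h1
  exact lt_of_lt_of_le (Real.exp_pos _) this

lemma dB_comm (x y : Bs) : dB x y = dB y x :=
  tsum_congr fun k => by rw [dist_comm]

lemma dB_cons_fst (a b : Circ) (x : Bs) : dB (cons a x) (cons b x) = dist a b := by
  unfold dB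
  rw [Summable.tsum_eq_zero_add (summable_dB _ _)]
  have h : ∀ k : ℕ, (1 / 2 : ℝ) ^ (k + 1) * dist (cons a x (k + 1)) (cons b x (k + 1)) = 0 := by
    intro k
    show (1 / 2 : ℝ) ^ (k + 1) * dist (x k) (x k) = 0
    simp
  simp [h, cons]

lemma pi_ne_zero_circ : ((Real.pi : ℝ) : Circ) ≠ 0 := by
  rw [Ne, AddCircle.coe_eq_zero_iff]
  rintro ⟨n, hn⟩
  rw [zsmul_eq_mul] at hn
  have hπ := Real.pi_pos
  have h2 : ((2 * n : ℤ) : ℝ) = 1 := by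
    push_cast
    have : ((n : ℝ) * 2 - 1) * Real.pi = 0 := by linarith [hn]
    rcases mul_eq_zero.mp this with h | h
    · linarith
    · exact absurd h (ne_of_gt hπ)
  have : (2 * n : ℤ) = 1 := by exact_mod_cast h2
  omega

lemma holder_nonneg {α H : ℝ} (hα0 : 0 < α) {A : Bs → ℝ} (hA : IsHolderB α H A) : 0 ≤ H := by
  set x : Bs := fun _ => 0 with hx
  set y : Bs := fun _ => ((Real.pi : ℝ) : Circ) with hy
  have hne : 0 < dist ((0 : Circ)) (((Real.pi : ℝ) : Circ)) :=
    dist_pos.mpr (Ne.symm pi_ne_zero_circ)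
  have hd : 0 < dB x y := by
    have hle := Summable.le_tsum (summable_dB x y) 0 (fun k _ => by positivity)
    calc (0:ℝ) < (1/2:ℝ)^(0:ℕ) * dist (x 0) (y 0) := by simpa [hx, hy] using hne
    _ ≤ dB x y := by
      show (1/2:ℝ)^(0:ℕ) * dist (x 0) (y 0) ≤ ∑' k : ℕ, (1 / 2 : ℝ) ^ k * dist (x k) (y k)
      exact hle
  have h1 := hA x y
  have hp : 0 < dB x y ^ α := Real.rpow_pos_of_pos hd α
  nlinarith [abs_nonneg (A x - A y)]

lemma continuous_holder_comp {α H : ℝ} (hα0 : 0 < α) (hH : 0 ≤ H) {A : Bs → ℝ}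
    (hA : IsHolderB α H A) (x : Bs) : Continuous (fun a : Circ => A (cons a x)) := by
  rw [Metric.continuous_iff]
  intro b ε hε
  refine ⟨(ε / (H + 1)) ^ (1/α), Real.rpow_pos_of_pos (by positivity) _, fun a hab => ?_⟩
  have hkey : |A (cons a x) - A (cons b x)| ≤ H * dist a b ^ α := by
    have := hA (cons a x) (cons b x)
    rwa [dB_cons_fst] at this
  have h1 : dist a b ^ α ≤ ((ε / (H + 1)) ^ (1/α)) ^ α :=
    Real.rpow_le_rpow dist_nonneg hab.le hα0.le
  have h2 : ((ε / (H + 1)) ^ (1/α)) ^ α = ε / (H + 1) := by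
    rw [one_div]
    exact Real.rpow_inv_rpow (by positivity) (ne_of_gt hα0)
  rw [Real.dist_eq]
  have h3 : H * dist a b ^ α ≤ H * (ε / (H + 1)) := by
    rw [← h2]
    exact mul_le_mul_of_nonneg_left h1 hH
  have h4 : H * (ε / (H + 1)) < ε := by
    rw [div_eq_mul_inv, ← mul_assoc]
    rw [mul_comm H ε, mul_assoc]
    have : H * (H + 1)⁻¹ < 1 := by
      rw [mul_inv_lt_iff₀ (by positivity)]
      linarith
    nlinarith
  linarith [hkey]

theorem holder_bound_fixed_point (α H : ℝ) (hα0 : 0 < α) (hα1 : α ≤ 1)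
    (A : Bs → ℝ) (hA : IsHolderB α H A)
    (s : ℝ) (hs0 : 0 < s) (hs1 : s < 1)
    (u : Bs → ℝ) (huc : Continuous u) (hub : ∃ C, ∀ x, |u x| ≤ C)
    (hfix : ∀ x, u x = Real.log (∫ a, Real.exp (A (cons a x) + s * u (cons a x)) ∂haarC)) :
    ∀ x y, |u x - u y| ≤ ((2 : ℝ) ^ α / ((2 : ℝ) ^ α - 1)) * H * dB x y ^ α := by
  obtain ⟨C0, hC0⟩ := hub
  set C := max C0 0 with hCdef
  have hC : ∀ x, |u x| ≤ C := fun x => le_trans (hC0 x) (le_max_left _ _)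
  have hCnn : (0:ℝ) ≤ C := le_max_right _ _
  have hH : 0 ≤ H := holder_nonneg hα0 hA
  have h2pos : (0:ℝ) < (2:ℝ) ^ α := Real.rpow_pos_of_pos two_pos α
  have h2gt : (1:ℝ) < (2:ℝ) ^ α :=
    (Real.one_lt_rpow_iff_of_pos two_pos).mpr (Or.inl ⟨one_lt_two, hα0⟩)
  set K := (2:ℝ) ^ α / ((2:ℝ) ^ α - 1) * H with hKdef
  have hKnn : 0 ≤ K := mul_nonneg (div_nonneg h2pos.le (by linarith)) hH
  have hKe : K * ((2:ℝ) ^ α - 1) = (2:ℝ) ^ α * H := by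
    have h1 : (2:ℝ) ^ α - 1 ≠ 0 := ne_of_gt (by linarith)
    rw [hKdef, div_mul_eq_mul_div, mul_comm ((2:ℝ)^α) H]
    rw [div_mul_cancel₀ _ h1, mul_comm]
  have hrec : (H + s * K) / (2:ℝ) ^ α ≤ K := by
    rw [div_le_iff₀ h2pos]
    nlinarith [hKe, mul_nonneg hKnn hH]
  -- continuity of the integrands
  have hgc : ∀ z : Bs, Continuous (fun a : Circ => A (cons a z) + s * u (cons a z)) :=
    fun z => ((continuous_holder_comp hα0 hH hA z).add
      (continuous_const.mul (huc.comp (continuous_cons z))))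
  -- main induction
  have key : ∀ n : ℕ, ∀ x y : Bs, |u x - u y| ≤ K * dB x y ^ α + 2 * C * s ^ n := by
    intro n
    induction n with
    | zero =>
      intro x y
      have h1 : |u x - u y| ≤ |u x| + |u y| := abs_sub _ _
      have h2 : (0:ℝ) ≤ K * dB x y ^ α :=
        mul_nonneg hKnn (Real.rpow_nonneg (dB_nonneg x y) α)
      have := hC x
      have := hC y
      simp only [pow_zero, mul_one]
      linarith
    | succ n ih =>
      have oneside : ∀ x y : Bs, u x - u y ≤ K * dB x y ^ α + 2 * C * s ^ (n + 1) := by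
        intro x y
        have hux := hfix x
        have huy := hfix y
        set B := K * dB x y ^ α + 2 * C * s ^ (n + 1) with hBdef
        set gx := fun a : Circ => A (cons a x) + s * u (cons a x) with hgx
        set gy := fun a : Circ => A (cons a y) + s * u (cons a y) with hgy
        have hdα : (0:ℝ) ≤ dB x y ^ α := Real.rpow_nonneg (dB_nonneg x y) α
        have hd2 : ∀ a : Circ, dB (cons a x) (cons a y) ^ α = dB x y ^ α / (2:ℝ) ^ α := by
          intro a
          rw [dB_cons, Real.div_rpow (dB_nonneg x y) (by norm_num : (0:ℝ) ≤ 2)]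
        have hpt : ∀ a : Circ, gx a ≤ gy a + B := by
          intro a
          have hAa : A (cons a x) - A (cons a y) ≤ H * (dB x y ^ α / (2:ℝ) ^ α) := by
            have := hA (cons a x) (cons a y)
            rw [hd2 a] at this
            exact le_trans (le_abs_self _) this
          have hua : u (cons a x) - u (cons a y) ≤ K * (dB x y ^ α / (2:ℝ) ^ α) + 2 * C * s ^ n := by
            have h := ih (cons a x) (cons a y)
            rw [hd2 a] at h
            linarith [le_abs_self (u (cons a x) - u (cons a y))]
          have hmul : (H + s * K) / (2:ℝ) ^ α * dB x y ^ α ≤ K * dB x y ^ α :=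
            mul_le_mul_of_nonneg_right hrec hdα
          have hexp : (H + s * K) / (2:ℝ) ^ α * dB x y ^ α
              = H * (dB x y ^ α / (2:ℝ) ^ α) + s * (K * (dB x y ^ α / (2:ℝ) ^ α)) := by
            field_simp
          show A (cons a x) + s * u (cons a x) ≤ A (cons a y) + s * u (cons a y) + B
          have hsu : s * (u (cons a x) - u (cons a y))
              ≤ s * (K * (dB x y ^ α / (2:ℝ) ^ α) + 2 * C * s ^ n) :=
            mul_le_mul_of_nonneg_left hua hs0.le
          rw [hBdef]
          have hpow : s * (2 * C * s ^ n) = 2 * C * s ^ (n + 1) := by ring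
          nlinarith [hsu, hAa, hmul, hexp]
        -- integrate
        have hix : Integrable (fun a => Real.exp (gx a)) haarC :=
          integrable_circ (Real.continuous_exp.comp (hgc x))
        have hiy : Integrable (fun a => Real.exp (gy a)) haarC :=
          integrable_circ (Real.continuous_exp.comp (hgc y))
        have hiyB : Integrable (fun a => Real.exp (gy a + B)) haarC :=
          integrable_circ (Real.continuous_exp.comp ((hgc y).add continuous_const))
        have hmono : (∫ a, Real.exp (gx a) ∂haarC) ≤ ∫ a, Real.exp (gy a + B) ∂haarC :=
          integral_mono hix hiyB (fun a => Real.exp_le_exp.mpr (hpt a))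
        have hsplit : (∫ a, Real.exp (gy a + B) ∂haarC)
            = (∫ a, Real.exp (gy a) ∂haarC) * Real.exp B := by
          simp only [Real.exp_add]
          exact integral_mul_const _ _
        have hIx : 0 < ∫ a, Real.exp (gx a) ∂haarC := integral_exp_pos (hgc x)
        have hIy : 0 < ∫ a, Real.exp (gy a) ∂haarC := integral_exp_pos (hgc y)
        have hlog : Real.log (∫ a, Real.exp (gx a) ∂haarC)
            ≤ Real.log ((∫ a, Real.exp (gy a) ∂haarC) * Real.exp B) := by
          rw [Real.log_le_log_iff hIx (by positivity)]
          rw [← hsplit]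
          exact hmono
        rw [Real.log_mul (ne_of_gt hIy) (Real.exp_ne_zero B), Real.log_exp] at hlog
        rw [hux, huy]
        linarith [hlog]
      intro x y
      rw [abs_sub_le_iff]
      constructor
      · exact oneside x y
      · have := oneside y x
        rwa [dB_comm y x] at this
  -- pass to the limit
  intro x y
  have htend : Tendsto (fun n : ℕ => K * dB x y ^ α + 2 * C * s ^ n) atTop
      (𝓝 (K * dB x y ^ α + 2 * C * 0)) :=
    tendsto_const_nhds.add
      ((tendsto_pow_atTop_nhds_zero_of_lt_one hs0.le hs1).const_mul (2 * C))
  have := ge_of_tendsto' htend (fun n => key n x y)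
  simpa using this
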